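/- Let X' be a partition of a finite set X of coarseness c, with closed partition model M, and let P be a probability distribution on X, writing P(B) = ∑_{y∈B} P(y) for a block B. Then inf_{Q∈M} D(P‖Q) = log c if and only if both of the following hold: (i) every block B of X' with P(B) > 0 has cardinality |B| = c; and (ii) for every block B with P(B) > 0 there is exactly one x ∈ B with P(x) > 0. -/

import Mathlib

open scoped BigOperators Classical

noncomputable section

variable {X : Type*}

/-- A probability distribution on a finite set `X`. -/
def IsProb [Fintype X] (P : X → ℝ) : Prop :=
  (∀ x, 0 ≤ P x) ∧ ∑ x, P x = 1

/-- Information divergence `D(P‖Q)` with values in `EReal`, equal to `⊤` if the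
support of `P` is not contained in the support of `Q`.  (The convention
`0 · log 0 = 0` holds automatically since `Real.log 0 = 0`.) -/
def KL [Fintype X] (P Q : X → ℝ) : EReal :=
  if ∀ x, Q x = 0 → P x = 0 then ((∑ x, P x * Real.log (P x / Q x) : ℝ) : EReal) else ⊤

/-- The exponential family with strictly positive reference measure `ν` and extended
tangent space `T` (a subspace of `ℝ^X` containing the constants): the set of strictly
positive probability distributions `P` with `log (P/ν) ∈ T`. -/
def expFam [Fintype X] (ν : X → ℝ) (T : Submodule ℝ (X → ℝ)) : Set (X → ℝ) :=
  {P | (∀ x, 0 < P x) ∧ ∑ x, P x = 1 ∧ (fun x => Real.log (P x / ν x)) ∈ T}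

/-- `sup_P inf_{Q ∈ E} D(P‖Q)`, supremum over all probability distributions `P`. -/
def maxDiv [Fintype X] (E : Set (X → ℝ)) : EReal :=
  ⨆ P ∈ {P : X → ℝ | IsProb P}, ⨅ Q ∈ E, KL P Q

/-- The orthogonal complement of `T` in `ℝ^X` w.r.t. the standard inner product
(the normal space of the exponential family with extended tangent space `T`). -/
def orthSpace [Fintype X] (T : Submodule ℝ (X → ℝ)) : Set (X → ℝ) :=
  {u | ∀ t ∈ T, ∑ x, u x * t x = 0}

/-- A circuit vector of a set `N ⊆ ℝ^X`: a nonzero element whose support is minimal,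
i.e. every `u ∈ N` with `supp u ⊆ supp v` is a scalar multiple of `v`. -/
def IsCircuitVector (N : Set (X → ℝ)) (v : X → ℝ) : Prop :=
  v ∈ N ∧ v ≠ 0 ∧ ∀ u ∈ N, Function.support u ⊆ Function.support v → ∃ α : ℝ, u = α • v

/-- A circuit of `N`: the support of a circuit vector. -/
def IsCircuit (N : Set (X → ℝ)) (σ : Set X) : Prop :=
  ∃ v, IsCircuitVector N v ∧ σ = Function.support v

/-- The closed partition model of the partition given by the equivalence relation `r`:
all probability distributions constant on each block. -/
def partModel [Fintype X] (r : X → X → Prop) : Set (X → ℝ) :=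
  {Q | IsProb Q ∧ ∀ x y, r x y → Q x = Q y}

/-- The partition exponential family of the partition given by the equivalence
relation `r`: all strictly positive probability distributions constant on each block. -/
def partExpFam [Fintype X] (r : X → X → Prop) : Set (X → ℝ) :=
  {P | (∀ x, 0 < P x) ∧ ∑ x, P x = 1 ∧ ∀ x y, r x y → P x = P y}

/-- The set `X̲` of points not annihilated by all of `N`. -/
def underlineSet (N : Set (X → ℝ)) : Set X := {x | ∃ v ∈ N, v x ≠ 0}

/-- The relation `x ∼ y` : every `v ∈ N` with `v x ≠ 0` has `v y ≠ 0`. -/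
def coRel (N : Set (X → ℝ)) (x y : X) : Prop := ∀ v ∈ N, v x ≠ 0 → v y ≠ 0

/-- `Z` is an equivalence class of `∼` on `X̲`. -/
def IsClassOf (N : Set (X → ℝ)) (Z : Set X) : Prop :=
  ∃ x ∈ underlineSet N, Z = {y | coRel N x y}

end

set_option maxHeartbeats 2000000 in
/-- characterization of the maximizers of the divergence from a
partition model of coarseness `c`. -/
theorem stmt5 (X : Type*) [Fintype X] [Nonempty X]
    (r : X → X → Prop) (hr : Equivalence r) (c : ℕ)
    (hc : IsGreatest {n : ℕ | ∃ x : X, ({y | r x y} : Set X).ncard = n} c)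
    (P : X → ℝ) (hP : IsProb P) :
    (⨅ Q ∈ partModel r, KL P Q) = ((Real.log (c : ℝ) : ℝ) : EReal) ↔
      ((∀ x : X, 0 < ∑ y ∈ {y | r x y}.toFinset, P y → ({y | r x y} : Set X).ncard = c) ∧
       (∀ x : X, 0 < ∑ y ∈ {y | r x y}.toFinset, P y → ∃! z : X, r x z ∧ 0 < P z)) := by
  classical
  obtain ⟨hP0, hP1⟩ := hP
  set st : Setoid X := ⟨r, hr⟩ with hst
  set B : X → Finset X := fun x => Finset.univ.filter (fun y => r x y) with hBdef
  have hmemB : ∀ {x y : X}, y ∈ B x ↔ r x y := by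
    intro x y; simp [hBdef]
  have hself : ∀ x, x ∈ B x := fun x => hmemB.2 (hr.refl x)
  have hBeq : ∀ {x y : X}, r x y → B x = B y := by
    intro x y h
    ext z
    simp only [hmemB]
    exact ⟨fun hz => hr.trans (hr.symm h) hz, fun hz => hr.trans h hz⟩
  set n : X → ℕ := fun x => (B x).card with hndef
  set f : X → ℝ := fun x => ∑ y ∈ B x, P y with hfdef
  have hneq : ∀ {x y : X}, r x y → n x = n y := by
    intro x y h; simp only [hndef]; rw [hBeq h]
  have hfeq : ∀ {x y : X}, r x y → f x = f y := by
    intro x y h; simp only [hfdef]; rw [hBeq h]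
  have hsetF : ∀ x : X, ({y | r x y} : Set X).toFinset = B x := by
    intro x; ext y; simp [hmemB, Set.mem_toFinset]
  have hncard : ∀ x : X, ({y | r x y} : Set X).ncard = n x := by
    intro x; rw [Set.ncard_eq_toFinset_card', hsetF]
  have hsumF : ∀ x : X, (∑ y ∈ ({y | r x y} : Set X).toFinset, P y) = f x := by
    intro x; rw [hsetF]
  have hn1 : ∀ x, 1 ≤ n x := fun x => Finset.card_pos.2 ⟨x, hself x⟩
  have hnc : ∀ x, n x ≤ c := fun x => hc.2 ⟨x, hncard x⟩
  have hc1 : 1 ≤ c := by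
    obtain ⟨x, hx⟩ := hc.1
    rw [hncard x] at hx
    have := hn1 x
    omega
  have hcR : (1 : ℝ) ≤ (c : ℝ) := by exact_mod_cast hc1
  have hcpos : (0 : ℝ) < (c : ℝ) := lt_of_lt_of_le one_pos hcR
  have hf0 : ∀ x, 0 ≤ f x := fun x => Finset.sum_nonneg fun y _ => hP0 y
  have hPf : ∀ x, P x ≤ f x := fun x =>
    Finset.single_le_sum (fun y _ => hP0 y) (hself x)
  have hnR : ∀ x, 0 < ((n x : ℝ)) := fun x => by exact_mod_cast hn1 x
  -- fiber decomposition over the quotient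
  have hfiber : ∀ q : Quotient st,
      (Finset.univ.filter (fun x => Quotient.mk st x = q)) = B q.out := by
    intro q
    ext y
    simp only [Finset.mem_filter, Finset.mem_univ, true_and, hmemB]
    constructor
    · intro h
      have h2 : Quotient.mk st y = Quotient.mk st q.out := by rw [h, Quotient.out_eq]
      exact hr.symm (Quotient.eq.1 h2)
    · intro h
      rw [← Quotient.out_eq q]
      exact Quotient.sound (hr.symm h)
  have blocksum : ∀ g : X → ℝ, ∑ x, g x = ∑ q : Quotient st, ∑ x ∈ B q.out, g x := by
    intro g
    rw [← Finset.sum_fiberwise Finset.univ (fun x => Quotient.mk st x) g]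
    exact Finset.sum_congr rfl fun q _ => by rw [hfiber q]
  have hblocksum_const : ∀ (a : X) (g : X → ℝ), (∀ x ∈ B a, g x = g a) →
      ∑ x ∈ B a, g x = (n a : ℝ) * g a := by
    intro a g hg
    rw [Finset.sum_congr rfl hg, Finset.sum_const, nsmul_eq_mul]
  -- the information projection
  set Qs : X → ℝ := fun x => f x / (n x : ℝ) with hQsdef
  have hQs0 : ∀ x, 0 ≤ Qs x := fun x => div_nonneg (hf0 x) (hnR x).le
  have hQseq : ∀ {x y : X}, r x y → Qs x = Qs y := by
    intro x y h; simp only [hQsdef]; rw [hfeq h, hneq h]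
  have hQs_block : ∀ a, ∑ x ∈ B a, Qs x = f a := by
    intro a
    rw [hblocksum_const a Qs (fun x hx => (hQseq (hmemB.1 hx)).symm)]
    simp only [hQsdef]
    rw [mul_comm]
    exact div_mul_cancel₀ _ (hnR a).ne'
  have hQs_sum : ∑ x, Qs x = 1 := by
    rw [blocksum Qs]
    have h2 : ∀ q : Quotient st, ∑ x ∈ B q.out, Qs x = ∑ x ∈ B q.out, P x :=
      fun q => hQs_block q.out
    rw [Finset.sum_congr rfl fun q _ => h2 q, ← blocksum P, hP1]
  have hQsmem : Qs ∈ partModel r := ⟨⟨hQs0, hQs_sum⟩, fun x y h => hQseq h⟩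
  have hQs_supp : ∀ x, Qs x = 0 → P x = 0 := by
    intro x hx
    have hfx : f x = 0 := by
      rcases div_eq_zero_iff.1 hx with h | h
      · exact h
      · exact absurd h (hnR x).ne'
    exact le_antisymm (hfx ▸ hPf x) (hP0 x)
  set Dstar : ℝ := ∑ x, P x * Real.log (P x / Qs x) with hDdef
  have hKLQs : KL P Qs = (Dstar : EReal) := by
    rw [KL, if_pos hQs_supp]
  have hKL_ge : ∀ Q ∈ partModel r, (Dstar : EReal) ≤ KL P Q := by
    rintro Q ⟨⟨hQ0, hQ1⟩, hQc⟩
    rw [KL]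
    split_ifs with hsupp
    · rw [EReal.coe_le_coe_iff]
      set g : X → ℝ := fun x => if f x = 0 then 0 else Q x * (P x * (n x : ℝ) / f x)
        with hgdef
      have hg_sum : ∑ x, g x ≤ 1 := by
        rw [blocksum g, ← hQ1, blocksum Q]
        refine Finset.sum_le_sum fun q _ => ?_
        by_cases hfa : f q.out = 0
        · have hz : ∀ x ∈ B q.out, g x = 0 := by
            intro x hx
            have hfx : f x = 0 := by rw [← hfeq (hmemB.1 hx)]; exact hfa
            simp [hgdef, hfx]
          rw [Finset.sum_eq_zero hz]
          exact Finset.sum_nonneg fun x _ => hQ0 x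
        · have hQblock : ∑ x ∈ B q.out, Q x = (n q.out : ℝ) * Q q.out :=
            hblocksum_const _ Q (fun x hx => (hQc q.out x (hmemB.1 hx)).symm)
          have hgx : ∀ x ∈ B q.out, g x = Q q.out * ((n q.out : ℝ) / f q.out) * P x := by
            intro x hx
            have h1 := hmemB.1 hx
            have hfx : f x ≠ 0 := by rw [← hfeq h1]; exact hfa
            simp only [hgdef]
            rw [if_neg hfx, ← hQc q.out x h1, ← hneq h1, ← hfeq h1]
            ring
          rw [Finset.sum_congr rfl hgx, ← Finset.mul_sum, hQblock]
          have hfsum : (∑ x ∈ B q.out, P x) = f q.out := rfl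
          rw [hfsum, mul_assoc, div_mul_cancel₀ _ hfa]
          exact le_of_eq (mul_comm _ _)
      have hterm : ∀ x, P x * Real.log (P x / Qs x) + (P x - g x) ≤
          P x * Real.log (P x / Q x) := by
        intro x
        rcases eq_or_lt_of_le (hP0 x) with hPx | hPx
        · have hgx : g x = 0 := by
            by_cases hfx : f x = 0 <;> simp [hgdef, hfx, ← hPx]
          rw [← hPx, hgx]; simp
        · have hfx : 0 < f x := lt_of_lt_of_le hPx (hPf x)
          have hQsx : 0 < Qs x := div_pos hfx (hnR x)
          have hQx : 0 < Q x := by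
            rcases (hQ0 x).lt_or_eq with h | h
            · exact h
            · exact absurd (hsupp x h.symm) hPx.ne'
          have hgx : g x = P x * (Q x / Qs x) := by
            simp only [hgdef, hQsdef]
            rw [if_neg hfx.ne']
            field_simp
          have hlog : Real.log (Q x / Qs x) ≤ Q x / Qs x - 1 :=
            Real.log_le_sub_one_of_pos (div_pos hQx hQsx)
          have hsplit : Real.log (P x / Qs x) =
              Real.log (P x / Q x) + Real.log (Q x / Qs x) := by
            rw [← Real.log_mul (div_pos hPx hQx).ne' (div_pos hQx hQsx).ne']
            congr 1
            field_simp
          rw [hgx, hsplit]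
          have h2 := mul_le_mul_of_nonneg_left hlog hPx.le
          nlinarith
      calc (Dstar : ℝ) ≤ Dstar + (1 - ∑ x, g x) := by linarith
        _ = ∑ x, (P x * Real.log (P x / Qs x) + (P x - g x)) := by
            rw [Finset.sum_add_distrib, Finset.sum_sub_distrib, hP1, hDdef]
        _ ≤ ∑ x, P x * Real.log (P x / Q x) := Finset.sum_le_sum fun x _ => hterm x
    · exact le_top
  have hInf : (⨅ Q ∈ partModel r, KL P Q) = (Dstar : EReal) := by
    apply le_antisymm
    · exact le_trans (iInf₂_le Qs hQsmem) hKLQs.le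
    · exact le_iInf₂ fun Q hQ => hKL_ge Q hQ
  rw [hInf, EReal.coe_eq_coe_iff]
  -- termwise upper bound by `log c`
  have hterm2 : ∀ x ∈ Finset.univ (α := X),
      P x * Real.log (P x / Qs x) ≤ P x * Real.log (c : ℝ) := by
    intro x _
    rcases eq_or_lt_of_le (hP0 x) with hPx | hPx
    · rw [← hPx]; simp
    · have hfx : 0 < f x := lt_of_lt_of_le hPx (hPf x)
      have hQsx : 0 < Qs x := div_pos hfx (hnR x)
      have hratio : P x / Qs x ≤ (c : ℝ) := by
        have h1 : P x / Qs x ≤ (n x : ℝ) := by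
          simp only [hQsdef]
          rw [div_div_eq_mul_div, div_le_iff₀ hfx]
          calc P x * (n x : ℝ) ≤ f x * (n x : ℝ) :=
                mul_le_mul_of_nonneg_right (hPf x) (hnR x).le
            _ = (n x : ℝ) * f x := mul_comm _ _
        exact h1.trans (by exact_mod_cast hnc x)
      exact mul_le_mul_of_nonneg_left
        (Real.log_le_log (div_pos hPx hQsx) hratio) hPx.le
  have hsumc : ∑ x, P x * Real.log (c : ℝ) = Real.log (c : ℝ) := by
    rw [← Finset.sum_mul, hP1, one_mul]
  constructor
  · intro hD
    have hall : ∀ x ∈ Finset.univ (α := X),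
        P x * Real.log (P x / Qs x) = P x * Real.log (c : ℝ) :=
      (Finset.sum_eq_sum_iff_of_le hterm2).1 (by rw [← hDdef, hD, hsumc])
    have key : ∀ x, 0 < P x → n x = c ∧ P x = f x := by
      intro x hPx
      have hfx : 0 < f x := lt_of_lt_of_le hPx (hPf x)
      have hQsx : 0 < Qs x := div_pos hfx (hnR x)
      have heq := hall x (Finset.mem_univ x)
      have hlogeq : Real.log (P x / Qs x) = Real.log (c : ℝ) :=
        mul_left_cancel₀ hPx.ne' heq
      have hratio : P x / Qs x = (c : ℝ) := by
        have h2 := congrArg Real.exp hlogeq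
        rwa [Real.exp_log (div_pos hPx hQsx), Real.exp_log hcpos] at h2
      have hval : P x * (n x : ℝ) / f x = (c : ℝ) := by
        rw [← hratio]
        simp only [hQsdef]
        rw [div_div_eq_mul_div]
      have hle1 : P x * (n x : ℝ) / f x ≤ (n x : ℝ) := by
        rw [div_le_iff₀ hfx]
        calc P x * (n x : ℝ) ≤ f x * (n x : ℝ) :=
              mul_le_mul_of_nonneg_right (hPf x) (hnR x).le
          _ = (n x : ℝ) * f x := mul_comm _ _
      have hcn : (c : ℝ) ≤ (n x : ℝ) := hval ▸ hle1
      have hnxc : n x = c := le_antisymm (hnc x) (by exact_mod_cast hcn)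
      refine ⟨hnxc, ?_⟩
      have h3 : P x * (n x : ℝ) / f x = (n x : ℝ) := by
        rw [hval, hnxc]
      have h4 : P x * (n x : ℝ) = (n x : ℝ) * f x := (div_eq_iff hfx.ne').1 h3
      have h5 : (n x : ℝ) * P x = (n x : ℝ) * f x := by rw [← h4]; ring
      exact mul_left_cancel₀ (hnR x).ne' h5
    have hexists : ∀ x : X, 0 < f x → ∃ y ∈ B x, 0 < P y := by
      intro x hx
      by_contra h
      push_neg at h
      have : f x = 0 := Finset.sum_eq_zero fun y hy => le_antisymm (h y hy) (hP0 y)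
      exact absurd this hx.ne'
    constructor
    · intro x hx
      rw [hsumF] at hx
      obtain ⟨y, hy, hPy⟩ := hexists x hx
      rw [hncard, hneq (hmemB.1 hy)]
      exact (key y hPy).1
    · intro x hx
      rw [hsumF] at hx
      obtain ⟨y, hy, hPy⟩ := hexists x hx
      refine ⟨y, ⟨hmemB.1 hy, hPy⟩, ?_⟩
      rintro z ⟨hrz, hPz⟩
      by_contra hne
      have h1 : P z = f x := (key z hPz).2.trans (hfeq hrz).symm
      have hsub : ({y, z} : Finset X) ⊆ B x := by
        intro w hw
        rcases Finset.mem_insert.1 hw with h | h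
        · exact h ▸ hy
        · exact (Finset.mem_singleton.1 h) ▸ hmemB.2 hrz
      have h3 : P y + P z ≤ f x := by
        calc P y + P z = ∑ w ∈ ({y, z} : Finset X), P w :=
              (Finset.sum_pair (fun h => hne h.symm)).symm
          _ ≤ ∑ w ∈ B x, P w :=
              Finset.sum_le_sum_of_subset_of_nonneg hsub fun i _ _ => hP0 i
          _ = f x := rfl
      linarith
  · rintro ⟨hcard, huniq⟩
    have hcard' : ∀ x, 0 < f x → n x = c := by
      intro x hx
      have h2 := hcard x (by rw [hsumF]; exact hx)
      rwa [hncard] at h2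
    have huniq' : ∀ x, 0 < f x → ∃! z : X, r x z ∧ 0 < P z := fun x hx =>
      huniq x (by rw [hsumF]; exact hx)
    have hall : ∀ x, P x * Real.log (P x / Qs x) = P x * Real.log (c : ℝ) := by
      intro x
      rcases eq_or_lt_of_le (hP0 x) with hPx | hPx
      · rw [← hPx]; simp
      · have hfx : 0 < f x := lt_of_lt_of_le hPx (hPf x)
        have hnxc := hcard' x hfx
        have hfP : f x = P x := by
          simp only [hfdef]
          apply Finset.sum_eq_single_of_mem x (hself x)
          intro y hy hne
          by_contra hPy0
          have hPy : 0 < P y := (hP0 y).lt_of_ne (Ne.symm hPy0)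
          obtain ⟨z, hz, hzu⟩ := huniq' x hfx
          have e1 := hzu y ⟨hmemB.1 hy, hPy⟩
          have e2 := hzu x ⟨hr.refl x, hPx⟩
          exact hne (e1.trans e2.symm)
        congr 1
        simp only [hQsdef]
        rw [div_div_eq_mul_div, hfP, hnxc, mul_comm, mul_div_assoc,
          div_self hPx.ne', mul_one]
    rw [hDdef, Finset.sum_congr rfl fun x _ => hall x, hsumc]
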